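/- (Two-parameter quantum Serre relations) In the algebra f, for all i ≠ j in I, ∑_{p+p'=1-2(i·j)/(i·i)} (-1)^p t_i^{-p(p' - 2⟨i,j⟩/(i·i) + 2⟨j,i⟩/(i·i))} θ_i^{(p)} θ_j θ_i^{(p')} = 0. -/

import Mathlib

/-!
STATEMENT 12 (two-parameter quantum Serre relations): In the algebra f
(the quotient of the free twisted bialgebra 'f by the radical 𝔍 of the
bilinear form), for all i ≠ j in I,
∑_{p+p'=1-2(i·j)/(i·i)} (-1)^p t_i^{-p(p' - 2⟨i,j⟩/(i·i) + 2⟨j,i⟩/(i·i))}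
  θ_i^{(p)} θ_j θ_i^{(p')} = 0.

We model 'f concretely (finitely supported functions on words), and express
the vanishing in f by asserting that the Serre element lies in the radical of
the bilinear form, i.e. pairs to zero with every element.  Here ⟨i,j⟩ = C i j,
i·j = C i j + C j i, i·i = 2 C i i, t_i = t^{C i i}, and the exponent of t_i is
written with the integer t-exponent -C i i·p·p' + p(C i j - C j i); the
hypothesis C i j + C j i = -N·C i i (N ∈ ℕ) encodes that 2(i·j)/(i·i) = -N is a
nonpositive integer, so that p + p' = N + 1.
-/

noncomputable section

abbrev QVT := FractionRing (MvPolynomial (Fin 2) ℚ)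

def v : QVT := algebraMap (MvPolynomial (Fin 2) ℚ) QVT (MvPolynomial.X 0)

def t : QVT := algebraMap (MvPolynomial (Fin 2) ℚ) QVT (MvPolynomial.X 1)

def qnumVT {K : Type*} [Field K] (v t : K) (n : ℕ) : K :=
  ((v * t) ^ (n : ℤ) - (v * t⁻¹) ^ (-(n : ℤ))) / (v * t - (v * t⁻¹)⁻¹)

def qfacVT {K : Type*} [Field K] (v t : K) (n : ℕ) : K :=
  ∏ j ∈ Finset.range n, qnumVT v t (j + 1)

variable {I : Type*} [Fintype I] [DecidableEq I]

abbrev FF (I : Type*) := FreeMonoid I →₀ QVT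

abbrev GG (I : Type*) := (FreeMonoid I × FreeMonoid I) →₀ QVT

def wt (w : FreeMonoid I) : I →₀ ℕ :=
  (w.toList.map fun i => Finsupp.single i 1).sum

def pairF (C : I → I → ℤ) (a b : I →₀ ℕ) : ℤ :=
  a.sum fun i m => b.sum fun j n => (m : ℤ) * C i j * (n : ℤ)

def dotF (C : I → I → ℤ) (a b : I →₀ ℕ) : ℤ :=
  pairF C a b + pairF C b a

def tw (C : I → I → ℤ) (a b : I →₀ ℕ) : QVT :=
  v ^ (-(dotF C a b)) * t ^ (pairF C a b - pairF C b a)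

def Dmat (C : I → I → ℤ) (i j : I) : ℤ :=
  (if i = j then 2 * C i i else 0) - C i j

def mulF (f g : FF I) : FF I :=
  f.sum fun p c => g.sum fun q d => Finsupp.single (p * q) (c * d)

def powF (f : FF I) : ℕ → FF I
  | 0 => Finsupp.single 1 1
  | n + 1 => mulF f (powF f n)

def θ (i : I) : FF I := Finsupp.single (FreeMonoid.of i) 1

/-- The divided power θ_i^{(n)}, with v_i = v^{C i i}, t_i = t^{C i i}. -/
def dpow (C : I → I → ℤ) (i : I) (n : ℕ) : FF I :=
  (qfacVT (v ^ (C i i)) (t ^ (C i i)) n)⁻¹ • powF (θ i) n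

def mulG (C : I → I → ℤ) (f g : GG I) : GG I :=
  f.sum fun p c => g.sum fun q d =>
    Finsupp.single (p.1 * q.1, p.2 * q.2) (tw C (wt q.1) (wt p.2) * (c * d))

def rW (C : I → I → ℤ) : List I → GG I
  | [] => Finsupp.single (1, 1) 1
  | i :: w =>
      mulG C
        (Finsupp.single (FreeMonoid.of i, 1) 1 + Finsupp.single (1, FreeMonoid.of i) 1)
        (rW C w)

def rF (C : I → I → ℤ) (f : FF I) : GG I :=
  f.sum fun p c => c • rW C p.toList

def tens (f g : FF I) : GG I :=
  f.sum fun p c => g.sum fun q d => Finsupp.single (p, q) (c * d)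

def B2 (C : I → I → ℤ) (B : FF I →ₗ[QVT] FF I →ₗ[QVT] QVT) (g h : GG I) : QVT :=
  g.sum fun p c => h.sum fun q d =>
    c * d * t ^ (2 * pairF (Dmat C) (wt p.1) (wt p.2))
      * B (Finsupp.single p.1 1) (Finsupp.single q.1 1)
      * B (Finsupp.single p.2 1) (Finsupp.single q.2 1)

/-- The two-parameter quantum Serre element
S_{ij} = ∑_{p+p'=N+1} (-1)^p t_i^{-p(p'-a'+a'')} θ_i^{(p)} θ_j θ_i^{(p')},
where a' = -2⟨i,j⟩/(i·i), a'' = -2⟨j,i⟩/(i·i), N = a'+a''; the coefficient is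
t_i^{-p(p'-a'+a'')} = t^{-C i i·p·p' + p(C i j - C j i)}. -/
def serre (C : I → I → ℤ) (i j : I) (N : ℕ) : FF I :=
  ∑ p ∈ Finset.range (N + 2),
    ((-1 : QVT) ^ p
        * t ^ (-(C i i) * p * ((N + 1 - p : ℕ) : ℤ) + p * (C i j - C j i))) •
      mulF (dpow C i p) (mulF (θ j) (dpow C i (N + 1 - p)))

/-! ### Auxiliary development for the proof -/

section SerreProof
set_option linter.unusedSectionVars false

lemma algebraMap_inj : Function.Injective (algebraMap (MvPolynomial (Fin 2) ℚ) QVT) :=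
  IsFractionRing.injective _ _

lemma v_ne : v ≠ 0 := by
  simp only [v, ne_eq, map_eq_zero_iff _ algebraMap_inj]
  exact MvPolynomial.X_ne_zero 0

lemma t_ne : t ≠ 0 := by
  simp only [t, ne_eq, map_eq_zero_iff _ algebraMap_inj]
  exact MvPolynomial.X_ne_zero 1

lemma v_pow_ne_one {k : ℕ} (hk : k ≠ 0) : v ^ k ≠ 1 := by
  intro h
  rw [v, ← map_pow, ← map_one (algebraMap (MvPolynomial (Fin 2) ℚ) QVT)] at h
  have := algebraMap_inj h
  have h2 := congrArg MvPolynomial.constantCoeff this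
  simp [MvPolynomial.constantCoeff_X, zero_pow hk] at h2

lemma v_zpow_ne_one {m : ℤ} (hm : m ≠ 0) : v ^ m ≠ 1 := by
  rcases m.lt_or_lt_of_ne hm with h | h
  · intro he
    have : v ^ (-m) = 1 := by rw [zpow_neg, he, inv_one]
    rw [show -m = ((-m).toNat : ℤ) by omega, zpow_natCast] at this
    exact v_pow_ne_one (by omega) this
  · intro he
    rw [show m = (m.toNat : ℤ) by omega, zpow_natCast] at he
    exact v_pow_ne_one (by omega) he

variable {I : Type*} [Fintype I] [DecidableEq I]

@[simp] lemma pairF_zero_left (C : I → I → ℤ) (b : I →₀ ℕ) : pairF C 0 b = 0 := by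
  simp [pairF]

@[simp] lemma pairF_zero_right (C : I → I → ℤ) (a : I →₀ ℕ) : pairF C a 0 = 0 := by
  simp [pairF]

lemma pairF_single_single (C : I → I → ℤ) (i j : I) (m n : ℕ) :
    pairF C (Finsupp.single i m) (Finsupp.single j n) = (m : ℤ) * C i j * n := by
  unfold pairF
  rw [Finsupp.sum_single_index (by simp), Finsupp.sum_single_index (by simp)]

lemma pairF_add_right (C : I → I → ℤ) (a b₁ b₂ : I →₀ ℕ) :
    pairF C a (b₁ + b₂) = pairF C a b₁ + pairF C a b₂ := by
  unfold pairF
  rw [← Finsupp.sum_add]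
  apply Finsupp.sum_congr
  intro i _
  rw [Finsupp.sum_add_index' (by simp) (by intro j n₁ n₂; push_cast; ring)]

@[simp] lemma tw_zero_left (C : I → I → ℤ) (b : I →₀ ℕ) : tw C 0 b = 1 := by
  simp [tw, dotF]

@[simp] lemma tw_zero_right (C : I → I → ℤ) (a : I →₀ ℕ) : tw C a 0 = 1 := by
  simp [tw, dotF]

@[simp] lemma wt_one : wt (1 : FreeMonoid I) = 0 := rfl

lemma wt_ofList_cons (m : I) (l : List I) :
    wt (FreeMonoid.ofList (m :: l)) = Finsupp.single m 1 + wt (FreeMonoid.ofList l) := by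
  simp [wt, FreeMonoid.toList_ofList]

@[simp] lemma wt_of (k : I) : wt (FreeMonoid.of k) = Finsupp.single k 1 := by
  simp [wt, FreeMonoid.toList_of]

lemma wt_ofList_replicate (n : ℕ) (i : I) :
    wt (FreeMonoid.ofList (List.replicate n i)) = Finsupp.single i n := by
  induction n with
  | zero => simp [wt]
  | succ n ih =>
      rw [List.replicate_succ, wt_ofList_cons, ih, ← Finsupp.single_add, add_comm]

lemma mulF_single_single (p q : FreeMonoid I) (b d : QVT) :
    mulF (Finsupp.single p b) (Finsupp.single q d) = Finsupp.single (p * q) (b * d) := by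
  unfold mulF
  rw [Finsupp.sum_single_index (by simp), Finsupp.sum_single_index (by simp)]

/-! ### Evaluation functionals and the structure of `rW` -/

instance freeMonoidDecEq {α : Type*} [DecidableEq α] : DecidableEq (FreeMonoid α) :=
  fun a b => decidable_of_iff (FreeMonoid.toList a = FreeMonoid.toList b)
    ⟨fun h => h, fun h => by rw [h]⟩

def evG (f : FreeMonoid I × FreeMonoid I → QVT) (g : GG I) : QVT :=
  g.sum fun q c => c * f q

def evF (f : FreeMonoid I → QVT) (g : FF I) : QVT :=
  g.sum fun u c => c * f u

lemma finsupp_sum_eq_zero {β M N : Type*} [Zero N] [AddCommMonoid M] {g : β →₀ N}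
    {F : β → N → M} (h : ∀ a c, F a c = 0) : g.sum F = 0 :=
  Finset.sum_eq_zero fun a _ => h a (g a)

lemma evG_congr {f f' : FreeMonoid I × FreeMonoid I → QVT} {g : GG I}
    (h : ∀ q, f q = f' q) : evG f g = evG f' g :=
  Finsupp.sum_congr fun q _ => by rw [h q]

lemma evF_congr {f f' : FreeMonoid I → QVT} {g : FF I}
    (h : ∀ q, f q = f' q) : evF f g = evF f' g :=
  Finsupp.sum_congr fun q _ => by rw [h q]

@[simp] lemma evG_single (f : FreeMonoid I × FreeMonoid I → QVT) (q : FreeMonoid I × FreeMonoid I)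
    (c : QVT) : evG f (Finsupp.single q c) = c * f q :=
  Finsupp.sum_single_index (zero_mul _)

@[simp] lemma evF_single (f : FreeMonoid I → QVT) (u : FreeMonoid I) (c : QVT) :
    evF f (Finsupp.single u c) = c * f u :=
  Finsupp.sum_single_index (zero_mul _)

@[simp] lemma evG_zero (f : FreeMonoid I × FreeMonoid I → QVT) : evG f (0 : GG I) = 0 :=
  Finsupp.sum_zero_index

@[simp] lemma evF_zero (f : FreeMonoid I → QVT) : evF f (0 : FF I) = 0 :=
  Finsupp.sum_zero_index

lemma evF_add (f : FreeMonoid I → QVT) (g h : FF I) :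
    evF f (g + h) = evF f g + evF f h :=
  Finsupp.sum_add_index' (fun _ => zero_mul _) (fun _ c d => add_mul c d _)

lemma evF_smul (f : FreeMonoid I → QVT) (b : QVT) (g : FF I) :
    evF f (b • g) = b * evF f g := by
  unfold evF
  rw [Finsupp.sum_smul_index (h := fun u c => c * f u) (fun i => zero_mul (f i)), Finsupp.mul_sum]
  exact Finsupp.sum_congr fun u _ => by ring

lemma evF_mapDomain (f : FreeMonoid I → QVT) (φ : FreeMonoid I → FreeMonoid I) (g : FF I) :
    evF f (Finsupp.mapDomain φ g) = evF (fun u => f (φ u)) g :=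
  Finsupp.sum_mapDomain_index (fun _ => zero_mul _) (fun _ c d => add_mul c d _)

lemma evF_mul_left (f : FreeMonoid I → QVT) (b : QVT) (g : FF I) :
    evF (fun u => b * f u) g = b * evF f g := by
  unfold evF
  rw [Finsupp.mul_sum]
  exact Finsupp.sum_congr fun u _ => by ring

lemma evG_mulG (C : I → I → ℤ) (ff g : GG I) (f : FreeMonoid I × FreeMonoid I → QVT) :
    evG f (mulG C ff g) = ff.sum fun p c => g.sum fun q d =>
      tw C (wt q.1) (wt p.2) * (c * d) * f (p.1 * q.1, p.2 * q.2) := by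
  unfold evG mulG
  rw [Finsupp.sum_sum_index (h := fun q c => c * f q) (fun q => zero_mul (f q)) (fun q c d => add_mul c d (f q))]
  refine Finsupp.sum_congr fun p _ => ?_
  rw [Finsupp.sum_sum_index (h := fun q c => c * f q) (fun q => zero_mul (f q)) (fun q c d => add_mul c d (f q))]
  refine Finsupp.sum_congr fun q _ => ?_
  rw [Finsupp.sum_single_index (zero_mul (f (p.1 * q.1, p.2 * q.2)))]

lemma evG_rW_cons (C : I → I → ℤ) (m : I) (w : List I)
    (f : FreeMonoid I × FreeMonoid I → QVT) :
    evG f (rW C (m :: w)) =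
      evG (fun q => f (FreeMonoid.of m * q.1, q.2)) (rW C w)
      + evG (fun q => tw C (wt q.1) (Finsupp.single m 1) * f (q.1, FreeMonoid.of m * q.2))
          (rW C w) := by
  show evG f (mulG C _ _) = _
  rw [evG_mulG]
  rw [Finsupp.sum_add_index' ?_ ?_]
  · rw [Finsupp.sum_single_index ?_, Finsupp.sum_single_index ?_]
    · congr 1
      · refine Finsupp.sum_congr fun q _ => ?_
        show tw C (wt q.1) (wt (1 : FreeMonoid I)) * ((1:QVT) * _) * _ = _
        rw [wt_one, tw_zero_right, one_mul, one_mul, one_mul]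
      · refine Finsupp.sum_congr fun q _ => ?_
        show tw C (wt q.1) (wt (FreeMonoid.of m)) * ((1:QVT) * _) * _ = _
        rw [wt_of, one_mul, one_mul]
        ring
    · exact finsupp_sum_eq_zero fun q _ => by ring
    · exact finsupp_sum_eq_zero fun q _ => by ring
  · intro p
    exact finsupp_sum_eq_zero fun q _ => by ring
  · intro p c d
    rw [← Finsupp.sum_add]
    exact Finsupp.sum_congr fun q _ => by ring

/-- The twisted left derivation associated to a letter `k`. -/
def rhoF (C : I → I → ℤ) (k : I) : List I → FF I
  | [] => 0
  | m :: w => (if m = k then Finsupp.single (FreeMonoid.ofList w) 1 else 0)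
      + tw C (Finsupp.single k 1) (Finsupp.single m 1) •
          Finsupp.mapDomain (fun u => FreeMonoid.of m * u) (rhoF C k w)

lemma ofList_ne_one (m : I) (l : List I) : FreeMonoid.ofList (m :: l) ≠ 1 := by
  intro h
  have := congrArg FreeMonoid.toList h
  simp [FreeMonoid.toList_ofList] at this

lemma mul_of_ne_one (m : I) (u : FreeMonoid I) : FreeMonoid.of m * u ≠ 1 := by
  intro h
  have := congrArg FreeMonoid.toList h
  rw [FreeMonoid.toList_mul, FreeMonoid.toList_of] at this
  simp at this

lemma mul_of_eq_of_iff (m k : I) (u : FreeMonoid I) :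
    FreeMonoid.of m * u = FreeMonoid.of k ↔ m = k ∧ u = 1 := by
  constructor
  · intro h
    have := congrArg FreeMonoid.toList h
    rw [FreeMonoid.toList_mul, FreeMonoid.toList_of, FreeMonoid.toList_of] at this
    have h1 : m = k ∧ u.toList = [] := by
      constructor
      · exact (List.cons_eq_cons.mp this).1
      · exact (List.cons_eq_cons.mp this).2
    exact ⟨h1.1, h1.2⟩
  · rintro ⟨rfl, rfl⟩
    exact mul_one _

lemma evG_rW_fst_one (C : I → I → ℤ) (p : List I) (f : FreeMonoid I → QVT) :
    evG (fun q => if q.1 = 1 then f q.2 else 0) (rW C p) = f (FreeMonoid.ofList p) := by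
  induction p generalizing f with
  | nil =>
      show evG _ (Finsupp.single ((1 : FreeMonoid I), (1 : FreeMonoid I)) 1) = _
      rw [evG_single, one_mul, if_pos rfl]
      rfl
  | cons m w ih =>
      rw [evG_rW_cons]
      have h1 : evG (fun q => if FreeMonoid.of m * q.1 = 1 then f q.2 else 0) (rW C w) = 0 := by
        rw [evG_congr (f' := fun _ => (0:QVT)) (fun q => by
          simp [mul_of_ne_one m q.1])]
        exact finsupp_sum_eq_zero fun q c => mul_zero c
      rw [h1, zero_add]
      rw [evG_congr (f' := fun q => if q.1 = 1 then f (FreeMonoid.of m * q.2) else 0)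
        (fun q => by by_cases h : q.1 = 1 <;> simp [h])]
      exact ih (fun u => f (FreeMonoid.of m * u))

lemma evG_rW_fst_of (C : I → I → ℤ) (k : I) (p : List I) (f : FreeMonoid I → QVT) :
    evG (fun q => if q.1 = FreeMonoid.of k then f q.2 else 0) (rW C p)
      = evF f (rhoF C k p) := by
  induction p generalizing f with
  | nil =>
      show evG _ (Finsupp.single ((1 : FreeMonoid I), (1 : FreeMonoid I)) 1) = _
      rw [evG_single, one_mul]
      have h1 : (1 : FreeMonoid I) ≠ FreeMonoid.of k := fun h => by
        have := congrArg FreeMonoid.toList h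
        simp [FreeMonoid.toList_of] at this
      rw [if_neg h1]
      show _ = evF f 0
      rw [evF_zero]
  | cons m w ih =>
      rw [evG_rW_cons]
      have h1 : evG (fun q => if FreeMonoid.of m * q.1 = FreeMonoid.of k then f q.2 else 0)
          (rW C w) = if m = k then f (FreeMonoid.ofList w) else 0 := by
        by_cases hmk : m = k
        · subst hmk
          rw [if_pos rfl, ← evG_rW_fst_one C w f]
          exact evG_congr fun q => by simp [mul_of_eq_of_iff]
        · rw [if_neg hmk]
          rw [evG_congr (f' := fun _ => (0:QVT)) (fun q => by
            simp [mul_of_eq_of_iff, hmk])]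
          exact finsupp_sum_eq_zero fun q c => mul_zero c
      rw [h1]
      have h2 : evG (fun q => tw C (wt q.1) (Finsupp.single m 1)
            * (if q.1 = FreeMonoid.of k then f (FreeMonoid.of m * q.2) else 0)) (rW C w)
          = tw C (Finsupp.single k 1) (Finsupp.single m 1)
            * evF (fun u => f (FreeMonoid.of m * u)) (rhoF C k w) := by
        rw [evG_congr (f' := fun q => if q.1 = FreeMonoid.of k then
              tw C (Finsupp.single k 1) (Finsupp.single m 1) * f (FreeMonoid.of m * q.2)
              else 0) (fun q => by by_cases h : q.1 = FreeMonoid.of k <;> simp [h])]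
        exact (ih (fun u => tw C (Finsupp.single k 1) (Finsupp.single m 1)
          * f (FreeMonoid.of m * u))).trans (evF_mul_left (fun u => f (FreeMonoid.of m * u)) _ _)
      rw [h2]
      show _ = evF f ((if m = k then Finsupp.single (FreeMonoid.ofList w) 1 else 0) + _)
      rw [evF_add, evF_smul, evF_mapDomain]
      congr 1
      by_cases hmk : m = k
      · rw [if_pos hmk, if_pos hmk, evF_single, one_mul]
      · rw [if_neg hmk, if_neg hmk, evF_zero]

/-! ### The pairing on words -/

section BLayer

variable (C : I → I → ℤ) (B : FF I →ₗ[QVT] FF I →ₗ[QVT] QVT)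

/-- The pairing of two basis words. -/
def Ee (p q : FreeMonoid I) : QVT := B (Finsupp.single p 1) (Finsupp.single q 1)

lemma tens_single_single (a b : FreeMonoid I) (c d : QVT) :
    tens (Finsupp.single a c) (Finsupp.single b d) = Finsupp.single (a, b) (c * d) := by
  unfold tens
  rw [Finsupp.sum_single_index (by simp), Finsupp.sum_single_index (by simp)]

lemma rF_single (u : FreeMonoid I) : rF C (Finsupp.single u (1:QVT)) = rW C u.toList := by
  unfold rF
  rw [Finsupp.sum_single_index (zero_smul QVT (rW C (FreeMonoid.toList u))), one_smul]

lemma B2_single (g : GG I) (a b : FreeMonoid I) :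
    B2 C B g (Finsupp.single (a, b) 1)
      = evG (fun q => t ^ (2 * pairF (Dmat C) (wt q.1) (wt q.2))
          * Ee B q.1 a * Ee B q.2 b) g := by
  unfold B2 evG Ee
  refine Finsupp.sum_congr fun q _ => ?_
  rw [Finsupp.sum_single_index (by ring)]
  ring

lemma Ee_symm (hsym : ∀ x y : FF I, B x y = B y x) (p q : FreeMonoid I) :
    Ee B p q = Ee B q p := hsym _ _

lemma Lright
    (hright : ∀ x y' y'' : FF I, B x (mulF y' y'') = B2 C B (rF C x) (tens y' y''))
    (p : List I) (k : I) (w : FreeMonoid I) :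
    Ee B (FreeMonoid.ofList p) (FreeMonoid.of k * w)
      = evG (fun q => t ^ (2 * pairF (Dmat C) (wt q.1) (wt q.2))
          * Ee B q.1 (FreeMonoid.of k) * Ee B q.2 w) (rW C p) := by
  have h := hright (Finsupp.single (FreeMonoid.ofList p) 1) (θ k) (Finsupp.single w 1)
  rw [show mulF (θ k) (Finsupp.single w 1) = Finsupp.single (FreeMonoid.of k * w) 1 by
        rw [show θ k = Finsupp.single (FreeMonoid.of k) (1:QVT) from rfl,
          mulF_single_single, one_mul]] at h
  rw [show tens (θ k) (Finsupp.single w 1) = Finsupp.single (FreeMonoid.of k, w) 1 by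
        rw [show θ k = Finsupp.single (FreeMonoid.of k) (1:QVT) from rfl,
          tens_single_single, one_mul]] at h
  rw [rF_single, FreeMonoid.toList_ofList, B2_single] at h
  exact h

lemma E_of_one
    (hone : B (Finsupp.single 1 1) (Finsupp.single 1 1) = 1)
    (hright : ∀ x y' y'' : FF I, B x (mulF y' y'') = B2 C B (rF C x) (tens y' y''))
    (k : I) : Ee B (FreeMonoid.of k) 1 = 0 := by
  have h := hright (θ k) (Finsupp.single 1 1) (Finsupp.single 1 1)
  rw [show mulF (Finsupp.single (1:FreeMonoid I) (1:QVT)) (Finsupp.single 1 1)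
        = Finsupp.single 1 1 by rw [mulF_single_single, one_mul, one_mul]] at h
  rw [show tens (Finsupp.single (1:FreeMonoid I) (1:QVT)) (Finsupp.single 1 1)
        = Finsupp.single ((1:FreeMonoid I), (1:FreeMonoid I)) 1 by
          rw [tens_single_single, one_mul]] at h
  rw [show θ k = Finsupp.single (FreeMonoid.of k) (1:QVT) from rfl] at h
  rw [rF_single, show (FreeMonoid.of k).toList = [k] from rfl, B2_single] at h
  rw [evG_rW_cons] at h
  rw [show rW C [] = Finsupp.single ((1:FreeMonoid I), (1:FreeMonoid I)) 1 from rfl] at h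
  rw [evG_single, evG_single] at h
  simp only [wt_one, wt_of, pairF_zero_left, pairF_zero_right, tw_zero_left,
    mul_zero, zpow_zero, one_mul, mul_one] at h
  have h1 : Ee B 1 1 = 1 := hone
  rw [h1] at h
  have h2 : Ee B (FreeMonoid.of k) 1
      = Ee B (FreeMonoid.of k) 1 * 1 + 1 * Ee B (FreeMonoid.of k) 1 := h
  linear_combination -1 * h2

lemma E_left_decomp
    (hleft : ∀ x' x'' y : FF I, B (mulF x' x'') y = B2 C B (tens x' x'') (rF C y))
    (m : I) (u : FreeMonoid I) (y : FreeMonoid I) :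
    Ee B (FreeMonoid.of m * u) y
      = evG (fun q => t ^ (2 * pairF (Dmat C) (Finsupp.single m 1) (wt u))
          * Ee B (FreeMonoid.of m) q.1 * Ee B u q.2) (rW C y.toList) := by
  have h := hleft (θ m) (Finsupp.single u 1) (Finsupp.single y 1)
  rw [show mulF (θ m) (Finsupp.single u 1) = Finsupp.single (FreeMonoid.of m * u) 1 by
        rw [show θ m = Finsupp.single (FreeMonoid.of m) (1:QVT) from rfl,
          mulF_single_single, one_mul]] at h
  rw [show tens (θ m) (Finsupp.single u 1) = Finsupp.single (FreeMonoid.of m, u) 1 by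
        rw [show θ m = Finsupp.single (FreeMonoid.of m) (1:QVT) from rfl,
          tens_single_single, one_mul]] at h
  rw [rF_single] at h
  refine h.trans ?_
  unfold B2 evG Ee
  rw [Finsupp.sum_single_index (by exact finsupp_sum_eq_zero fun q c => by ring)]
  refine Finsupp.sum_congr fun q _ => ?_
  simp only [wt_of]
  ring

lemma E_ne_one_right
    (hone : B (Finsupp.single 1 1) (Finsupp.single 1 1) = 1)
    (hright : ∀ x y' y'' : FF I, B x (mulF y' y'') = B2 C B (rF C x) (tens y' y''))
    (hleft : ∀ x' x'' y : FF I, B (mulF x' x'') y = B2 C B (tens x' x'') (rF C y))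
    (p : FreeMonoid I) (hp : p ≠ 1) : Ee B p 1 = 0 := by
  rcases hl : p.toList with _ | ⟨m, l⟩
  · exact absurd hl hp
  · have hp' : p = FreeMonoid.of m * FreeMonoid.ofList l := hl
    rw [hp', E_left_decomp C B hleft]
    rw [show rW C (1:FreeMonoid I).toList
        = Finsupp.single ((1:FreeMonoid I), (1:FreeMonoid I)) 1 from rfl]
    rw [evG_single, E_of_one C B hone hright]
    ring

lemma E_right_of
    (hsym : ∀ x y : FF I, B x y = B y x)
    (hone : B (Finsupp.single 1 1) (Finsupp.single 1 1) = 1)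
    (hθθ : ∀ i j : I, B (θ i) (θ j) = if i = j then (1 - v ^ (-(2 * C i i)))⁻¹ else 0)
    (hright : ∀ x y' y'' : FF I, B x (mulF y' y'') = B2 C B (rF C x) (tens y' y''))
    (hleft : ∀ x' x'' y : FF I, B (mulF x' x'') y = B2 C B (tens x' x'') (rF C y))
    (p : FreeMonoid I) (k : I) :
    Ee B p (FreeMonoid.of k)
      = if p = FreeMonoid.of k then (1 - v ^ (-(2 * C k k)))⁻¹ else 0 := by
  rcases hl : p.toList with _ | ⟨m, l⟩
  · have hp : p = 1 := hl
    rw [hp, Ee_symm B hsym, E_of_one C B hone hright]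
    rw [if_neg (fun hc : (1:FreeMonoid I) = FreeMonoid.of k => by
      have := congrArg FreeMonoid.toList hc
      simp [FreeMonoid.toList_of] at this)]
  · have hp' : p = FreeMonoid.of m * FreeMonoid.ofList l := hl
    rw [hp', E_left_decomp C B hleft]
    rw [show rW C (FreeMonoid.of k).toList = rW C [k] from rfl]
    rw [evG_rW_cons]
    rw [show rW C [] = Finsupp.single ((1:FreeMonoid I), (1:FreeMonoid I)) 1 from rfl]
    rw [evG_single, evG_single]
    simp only [wt_one, tw_zero_left, one_mul, mul_one]
    rcases l with _ | ⟨m', l'⟩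
    · have h2 : Ee B (FreeMonoid.ofList ([]:List I)) (FreeMonoid.of k)
          = Ee B (FreeMonoid.of k) 1 := by
        rw [Ee_symm B hsym]; rfl
      rw [h2, E_of_one C B hone hright]
      have h3 : Ee B (FreeMonoid.ofList ([]:List I)) 1 = 1 := hone
      have h4 : Ee B (FreeMonoid.of m) (FreeMonoid.of k) = B (θ m) (θ k) := rfl
      rw [h4, hθθ]
      have h5 : (FreeMonoid.of m * FreeMonoid.ofList ([]:List I) = FreeMonoid.of k)
          ↔ m = k := by
        rw [mul_of_eq_of_iff]
        constructor
        · exact fun h => h.1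
        · exact fun h => ⟨h, rfl⟩
      by_cases hmk : m = k
      · subst hmk
        rw [if_pos rfl, if_pos (h5.mpr rfl), h3]
        simp [wt_one]
      · rw [if_neg hmk, if_neg (fun hc => hmk (h5.mp hc))]
        ring
    · have h7 : Ee B (FreeMonoid.ofList (m' :: l')) 1 = 0 :=
        E_ne_one_right C B hone hright hleft _ (ofList_ne_one m' l')
      have h8 : Ee B (FreeMonoid.of m) 1 = 0 := E_of_one C B hone hright m
      rw [h7, h8]
      rw [if_neg (fun hc : FreeMonoid.of m * FreeMonoid.ofList (m' :: l')
          = FreeMonoid.of k => by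
        have := (mul_of_eq_of_iff _ _ _).mp hc
        exact ofList_ne_one m' l' this.2)]
      ring

/-- The master recursion for the pairing. -/
lemma E_rec
    (hsym : ∀ x y : FF I, B x y = B y x)
    (hone : B (Finsupp.single 1 1) (Finsupp.single 1 1) = 1)
    (hθθ : ∀ i j : I, B (θ i) (θ j) = if i = j then (1 - v ^ (-(2 * C i i)))⁻¹ else 0)
    (hright : ∀ x y' y'' : FF I, B x (mulF y' y'') = B2 C B (rF C x) (tens y' y''))
    (hleft : ∀ x' x'' y : FF I, B (mulF x' x'') y = B2 C B (tens x' x'') (rF C y))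
    (p : List I) (k : I) (w : FreeMonoid I) :
    Ee B (FreeMonoid.ofList p) (FreeMonoid.of k * w)
      = (1 - v ^ (-(2 * C k k)))⁻¹
        * evF (fun u => t ^ (2 * pairF (Dmat C) (Finsupp.single k 1) (wt u)) * Ee B u w)
            (rhoF C k p) := by
  rw [Lright C B hright]
  rw [evG_congr (f' := fun q => if q.1 = FreeMonoid.of k then
        (1 - v ^ (-(2 * C k k)))⁻¹
        * (t ^ (2 * pairF (Dmat C) (Finsupp.single k 1) (wt q.2)) * Ee B q.2 w) else 0)
      (fun q => by
        rw [E_right_of C B hsym hone hθθ hright hleft]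
        by_cases h : q.1 = FreeMonoid.of k
        · simp only [h, wt_of, if_true, eq_self_iff_true]
          ring
        · simp [h])]
  exact (evG_rW_fst_of C k p (fun u => (1 - v ^ (-(2 * C k k)))⁻¹
      * (t ^ (2 * pairF (Dmat C) (Finsupp.single k 1) (wt u)) * Ee B u w))).trans
    (evF_mul_left (fun u => t ^ (2 * pairF (Dmat C) (Finsupp.single k 1) (wt u)) * Ee B u w)
      _ _)

end BLayer

/-! ### `rhoF` on the Serre words -/

def geo (x : QVT) (n : ℕ) : QVT := ∑ m ∈ Finset.range n, x ^ m

@[simp] lemma geo_zero (x : QVT) : geo x 0 = 0 := by simp [geo]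

@[simp] lemma geo_one (x : QVT) : geo x 1 = 1 := by simp [geo]

lemma geo_succ_left (x : QVT) (n : ℕ) : geo x (n + 1) = 1 + x * geo x n := by
  unfold geo
  rw [Finset.sum_range_succ']
  rw [Finset.mul_sum]
  simp only [pow_zero, pow_succ]
  rw [add_comm]
  congr 1
  exact Finset.sum_congr rfl fun m _ => by ring

def twi (C : I → I → ℤ) (a b : I) : QVT := tw C (Finsupp.single a 1) (Finsupp.single b 1)

lemma rhoF_cons (C : I → I → ℤ) (k m : I) (w : List I) :
    rhoF C k (m :: w) = (if m = k then Finsupp.single (FreeMonoid.ofList w) 1 else 0)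
      + twi C k m •
          Finsupp.mapDomain (fun u => FreeMonoid.of m * u) (rhoF C k w) := rfl

lemma rhoF_not_mem (C : I → I → ℤ) (k : I) (l : List I) (h : k ∉ l) : rhoF C k l = 0 := by
  induction l with
  | nil => rfl
  | cons m w ih =>
      rw [rhoF_cons, if_neg (fun hc => h (List.mem_cons.mpr (Or.inl hc.symm))),
        ih (fun hc => h (List.mem_cons_of_mem m hc)), Finsupp.mapDomain_zero,
        smul_zero, add_zero]

lemma rhoF_replicate (C : I → I → ℤ) (i : I) (n : ℕ) :
    rhoF C i (List.replicate n i)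
      = geo (twi C i i) n • Finsupp.single (FreeMonoid.ofList (List.replicate (n-1) i)) 1 := by
  induction n with
  | zero => rw [geo_zero, zero_smul]; rfl
  | succ n ih =>
      rw [List.replicate_succ, rhoF_cons, if_pos rfl, ih, Finsupp.mapDomain_smul,
        Finsupp.mapDomain_single, smul_smul]
      rcases n with _ | n'
      · rw [geo_zero, mul_zero, zero_smul, add_zero, geo_one, one_smul]
      · have hw : FreeMonoid.of i * FreeMonoid.ofList (List.replicate (n' + 1 - 1) i)
            = FreeMonoid.ofList (List.replicate (n' + 1) i) := by
          rw [Nat.add_sub_cancel, List.replicate_succ]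
          rfl
        rw [hw, Nat.add_sub_cancel]
        rw [geo_succ_left (twi C i i) (n' + 1)]
        rw [add_smul, one_smul]

lemma rhoF_serre_j (C : I → I → ℤ) {i j : I} (hij : i ≠ j) (p b : ℕ) :
    rhoF C j (List.replicate p i ++ j :: List.replicate b i)
      = (twi C j i) ^ p •
          Finsupp.single (FreeMonoid.ofList (List.replicate (p + b) i)) 1 := by
  induction p with
  | zero =>
      rw [List.replicate, List.nil_append, rhoF_cons, if_pos rfl]
      rw [rhoF_not_mem C j (List.replicate b i)
        (fun hc => hij ((List.mem_replicate.mp hc).2.symm))]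
      rw [Finsupp.mapDomain_zero, smul_zero, add_zero, pow_zero, one_smul, Nat.zero_add]
  | succ p ih =>
      rw [List.replicate_succ, List.cons_append, rhoF_cons, if_neg hij, zero_add, ih,
        Finsupp.mapDomain_smul, Finsupp.mapDomain_single, smul_smul]
      have hw : FreeMonoid.of i * FreeMonoid.ofList (List.replicate (p + b) i)
          = FreeMonoid.ofList (List.replicate (p + 1 + b) i) := by
        rw [show p + 1 + b = (p + b) + 1 by omega, List.replicate_succ]
        rfl
      rw [hw, ← pow_succ']

lemma rhoF_serre_i (C : I → I → ℤ) {i j : I} (hij : i ≠ j) (p b : ℕ) :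
    rhoF C i (List.replicate p i ++ j :: List.replicate b i)
      = geo (twi C i i) p •
          Finsupp.single (FreeMonoid.ofList (List.replicate (p-1) i ++ j :: List.replicate b i)) 1
        + ((twi C i i) ^ p * twi C i j * geo (twi C i i) b) •
          Finsupp.single (FreeMonoid.ofList (List.replicate p i ++ j :: List.replicate (b-1) i)) 1 := by
  induction p with
  | zero =>
      rw [List.replicate, List.nil_append, rhoF_cons, if_neg (Ne.symm hij)]
      rw [rhoF_replicate C i b, Finsupp.mapDomain_smul, Finsupp.mapDomain_single, smul_smul]
      rw [geo_zero, zero_smul, zero_add, pow_zero, one_mul, zero_add]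
      rfl
  | succ p ih =>
      rw [List.replicate_succ, List.cons_append, rhoF_cons, if_pos rfl, ih]
      rw [Finsupp.mapDomain_add, Finsupp.mapDomain_smul, Finsupp.mapDomain_smul,
        Finsupp.mapDomain_single, Finsupp.mapDomain_single, smul_add, smul_smul, smul_smul]
      have hw2 : FreeMonoid.of i * FreeMonoid.ofList (List.replicate p i ++ j :: List.replicate (b-1) i)
          = FreeMonoid.ofList (List.replicate (p+1) i ++ j :: List.replicate (b-1) i) := by
        rw [List.replicate_succ, List.cons_append]
        rfl
      rw [hw2]
      have hco : twi C i i * ((twi C i i) ^ p * twi C i j * geo (twi C i i) b)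
          = (twi C i i) ^ (p+1) * twi C i j * geo (twi C i i) b := by
        rw [pow_succ']
        ring
      rw [hco, ← add_assoc]
      congr 1
      rcases p with _ | p'
      · rw [geo_zero, mul_zero, zero_smul, add_zero, geo_one, one_smul, Nat.sub_self]
      · have hw1 : FreeMonoid.of i * FreeMonoid.ofList (List.replicate (p'+1-1) i ++ j :: List.replicate b i)
            = FreeMonoid.ofList (List.replicate (p'+1) i ++ j :: List.replicate b i) := by
          rw [Nat.add_sub_cancel]
          rw [List.replicate_succ, List.cons_append]
          rfl
        rw [hw1, Nat.add_sub_cancel]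
        rw [geo_succ_left (twi C i i) (p'+1), add_smul, one_smul]

/-! ### Scalar identities: toolkit -/

lemma vmul (A B : ℤ) : v ^ A * v ^ B = v ^ (A + B) := (zpow_add₀ v_ne A B).symm

lemma tmul (A B : ℤ) : t ^ A * t ^ B = t ^ (A + B) := (zpow_add₀ t_ne A B).symm

lemma VT_mul (X Y X' Y' : ℤ) :
    (v ^ X * t ^ Y) * (v ^ X' * t ^ Y') = v ^ (X + X') * t ^ (Y + Y') := by
  rw [mul_mul_mul_comm, vmul, tmul]

lemma vpowpow (A : ℤ) (n : ℕ) : (v ^ A) ^ n = v ^ (A * n) := by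
  rw [← zpow_natCast (v ^ A) n, ← zpow_mul]

lemma tpowpow (A : ℤ) (n : ℕ) : (t ^ A) ^ n = t ^ (A * n) := by
  rw [← zpow_natCast (t ^ A) n, ← zpow_mul]

lemma VT_pow (X Y : ℤ) (n : ℕ) :
    (v ^ X * t ^ Y) ^ n = v ^ (X * n) * t ^ (Y * n) := by
  rw [mul_pow, vpowpow, tpowpow]

lemma VT_inv (X Y : ℤ) : (v ^ X * t ^ Y)⁻¹ = v ^ (-X) * t ^ (-Y) := by
  rw [mul_inv, ← zpow_neg, ← zpow_neg]

lemma VT_eq {X Y X' Y' : ℤ} (h1 : X = X') (h2 : Y = Y') :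
    v ^ X * t ^ Y = v ^ X' * t ^ Y' := by rw [h1, h2]

lemma v_zpow_ne (X : ℤ) : v ^ X ≠ 0 := zpow_ne_zero X v_ne

lemma t_zpow_ne (Y : ℤ) : t ^ Y ≠ 0 := zpow_ne_zero Y t_ne

lemma VT_ne (X Y : ℤ) : v ^ X * t ^ Y ≠ 0 := mul_ne_zero (v_zpow_ne X) (t_zpow_ne Y)

lemma VT_v (X : ℤ) : v ^ X = v ^ X * t ^ (0:ℤ) := by rw [zpow_zero, mul_one]

lemma VT_t (Y : ℤ) : t ^ Y = v ^ (0:ℤ) * t ^ Y := by rw [zpow_zero, one_mul]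

/-! qnum computations -/

lemma hd_inv (u s : QVT) (hu : u ≠ 0) (hs : s ≠ 0) : (u * s⁻¹)⁻¹ = u⁻¹ * s := by
  rw [mul_inv, inv_inv]

lemma denom_ne (u s : QVT) (hu : u ≠ 0) (hs : s ≠ 0) (h1 : u * u ≠ 1) :
    u * s - (u * s⁻¹)⁻¹ ≠ 0 := by
  have he : u * s - (u * s⁻¹)⁻¹ = s * u⁻¹ * (u * u - 1) := by
    rw [hd_inv u s hu hs]
    field_simp
  rw [he]
  exact mul_ne_zero (mul_ne_zero hs (inv_ne_zero hu)) (sub_ne_zero.mpr h1)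

lemma qnum_one (u s : QVT) (hu : u ≠ 0) (hs : s ≠ 0) (h1 : u * u ≠ 1) :
    qnumVT u s 1 = 1 := by
  unfold qnumVT
  rw [show ((1:ℕ):ℤ) = 1 from rfl, zpow_one, zpow_neg, zpow_one]
  exact div_self (denom_ne u s hu hs h1)

lemma qnum_rec (u s : QVT) (hu : u ≠ 0) (hs : s ≠ 0) (h1 : u * u ≠ 1) (n : ℕ) :
    qnumVT u s (n + 2) = (u * s) * qnumVT u s (n + 1) + (u⁻¹ * s) ^ (n + 1) := by
  have hden := denom_ne u s hu hs h1
  unfold qnumVT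
  rw [div_eq_iff hden, add_mul, ← mul_div_assoc, div_mul_cancel₀ _ hden]
  have hz1 : ((u * s) ^ ((n + 2 : ℕ) : ℤ)) = (u * s) ^ (n + 2 : ℕ) := zpow_natCast _ _
  have hz2 : ((u * s) ^ ((n + 1 : ℕ) : ℤ)) = (u * s) ^ (n + 1 : ℕ) := zpow_natCast _ _
  have hz3 : (u * s⁻¹) ^ (-((n + 2 : ℕ) : ℤ)) = (u⁻¹ * s) ^ (n + 2 : ℕ) := by
    rw [zpow_neg, zpow_natCast, ← inv_pow, hd_inv u s hu hs]
  have hz4 : (u * s⁻¹) ^ (-((n + 1 : ℕ) : ℤ)) = (u⁻¹ * s) ^ (n + 1 : ℕ) := by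
    rw [zpow_neg, zpow_natCast, ← inv_pow, hd_inv u s hu hs]
  rw [hz1, hz2, hz3, hz4, hd_inv u s hu hs]
  rw [pow_succ (u * s) (n + 1), pow_succ (u⁻¹ * s) (n + 1)]
  ring

lemma qnum_formula (u s : QVT) (hu : u ≠ 0) (hs : s ≠ 0) (h1 : u * u ≠ 1) (n : ℕ) :
    qnumVT u s (n + 1) = (u * s) ^ n * geo ((u * u)⁻¹) (n + 1) := by
  induction n with
  | zero => rw [qnum_one u s hu hs h1, pow_zero, geo_one, mul_one]
  | succ n ih =>
      rw [qnum_rec u s hu hs h1 n, ih]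
      have hkey : (u⁻¹ * s) ^ (n + 1) = (u * s) ^ (n + 1) * ((u * u)⁻¹) ^ (n + 1) := by
        rw [← mul_pow]
        congr 1
        field_simp
      rw [hkey]
      have hg : geo ((u * u)⁻¹) (n + 2) = geo ((u * u)⁻¹) (n + 1) + ((u * u)⁻¹) ^ (n + 1) := by
        unfold geo
        rw [Finset.sum_range_succ]
      rw [hg, pow_succ (u * s) n]
      ring

lemma uu_inv (c : ℤ) : (v ^ c * v ^ c)⁻¹ = v ^ (-(2 * c)) := by
  rw [vmul, ← zpow_neg]
  congr 1
  ring

lemma uu_ne_one (c : ℤ) (hc : c ≠ 0) : v ^ c * v ^ c ≠ 1 := by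
  rw [vmul]
  exact v_zpow_ne_one (by omega)

lemma qnum_c (c : ℤ) (hc : c ≠ 0) (n : ℕ) :
    qnumVT (v ^ c) (t ^ c) (n + 1)
      = (v ^ (c * n) * t ^ (c * n)) * geo (v ^ (-(2 * c))) (n + 1) := by
  rw [qnum_formula (v ^ c) (t ^ c) (v_zpow_ne c) (t_zpow_ne c) (uu_ne_one c hc) n]
  rw [VT_pow, uu_inv]

lemma geo_ne (c : ℤ) (hc : c ≠ 0) (n : ℕ) : geo (v ^ (-(2 * c))) (n + 1) ≠ 0 := by
  intro h
  have hg := geom_sum_mul (v ^ (-(2 * c))) (n + 1)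
  rw [show (∑ i ∈ Finset.range (n + 1), (v ^ (-(2 * c))) ^ i)
      = geo (v ^ (-(2 * c))) (n + 1) from rfl, h, zero_mul] at hg
  have h2 : (v ^ (-(2 * c))) ^ (n + 1) = 1 := by linear_combination -hg
  rw [vpowpow] at h2
  exact v_zpow_ne_one (mul_ne_zero (by omega)
    (by exact_mod_cast Nat.succ_ne_zero n)) h2

def Fc (c : ℤ) (n : ℕ) : QVT := qfacVT (v ^ c) (t ^ c) n

lemma Fc_zero (c : ℤ) : Fc c 0 = 1 := by
  unfold Fc qfacVT
  rw [Finset.prod_range_zero]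

lemma Fc_succ (c : ℤ) (hc : c ≠ 0) (k : ℕ) :
    Fc c (k + 1) = Fc c k * ((v ^ (c * k) * t ^ (c * k)) * geo (v ^ (-(2 * c))) (k + 1)) := by
  unfold Fc qfacVT
  rw [Finset.prod_range_succ, qnum_c c hc k]

lemma Fc_ne (c : ℤ) (hc : c ≠ 0) (n : ℕ) : Fc c n ≠ 0 := by
  induction n with
  | zero => rw [Fc_zero]; exact one_ne_zero
  | succ k ih =>
      rw [Fc_succ c hc k]
      exact mul_ne_zero ih (mul_ne_zero (VT_ne _ _) (geo_ne c hc k))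

/-! ### Gaussian binomials and the q-binomial theorem -/

def tri : ℕ → ℕ
  | 0 => 0
  | p + 1 => tri p + p

lemma tri_add (a b : ℕ) : tri (a + b) = tri a + tri b + a * b := by
  induction b with
  | zero => simp [tri]
  | succ b ih =>
      rw [show a + (b + 1) = (a + b) + 1 by omega]
      rw [show tri ((a+b)+1) = tri (a+b) + (a+b) from rfl, ih,
        show tri (b+1) = tri b + b from rfl]
      ring

def gb (x : QVT) : ℕ → ℕ → QVT
  | _, 0 => 1
  | 0, _ + 1 => 0
  | n + 1, k + 1 => gb x n k + x ^ (k+1) * gb x n (k+1)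

lemma gb_gt (x : QVT) : ∀ n k, n < k → gb x n k = 0
  | 0, _ + 1, _ => rfl
  | n + 1, k + 1, _ => by
      rw [show gb x (n+1) (k+1) = gb x n k + x ^ (k+1) * gb x n (k+1) from rfl,
        gb_gt x n k (by omega), gb_gt x n (k+1) (by omega), mul_zero, add_zero]

lemma gb_zero (x : QVT) (n : ℕ) : gb x n 0 = 1 := by cases n <;> rfl

def facg (x : QVT) (n : ℕ) : QVT := ∏ m ∈ Finset.range n, geo x (m + 1)

lemma facg_zero (x : QVT) : facg x 0 = 1 := by
  unfold facg
  rw [Finset.prod_range_zero]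

lemma facg_succ (x : QVT) (n : ℕ) : facg x (n + 1) = facg x n * geo x (n + 1) := by
  unfold facg
  rw [Finset.prod_range_succ]

lemma geo_succ_right (x : QVT) (n : ℕ) : geo x (n + 1) = geo x n + x ^ n := by
  unfold geo
  rw [Finset.sum_range_succ]

lemma geo_add (x : QVT) (a b : ℕ) : geo x (a + b) = geo x a + x ^ a * geo x b := by
  induction b with
  | zero => rw [Nat.add_zero, geo_zero, mul_zero, add_zero]
  | succ b ih =>
      rw [show a + (b + 1) = (a + b) + 1 by omega, geo_succ_right, ih,
        geo_succ_right x b, pow_add]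
      ring

lemma gb_fac (x : QVT) : ∀ n, ∀ k, k ≤ n →
    gb x n k * (facg x k * facg x (n - k)) = facg x n := by
  intro n
  induction n with
  | zero =>
      intro k hk
      interval_cases k
      simp [facg_zero, gb_zero x 0]
  | succ n ih =>
      intro k hk
      match k with
      | 0 =>
          rw [gb_zero x (n+1), facg_zero, one_mul, one_mul, Nat.sub_zero]
      | k + 1 =>
          rw [show gb x (n+1) (k+1) = gb x n k + x ^ (k+1) * gb x n (k+1) from rfl]
          rcases Nat.lt_or_ge n (k+1) with hn | hn
          · have hkn : k = n := by omega
            subst hkn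
            rw [gb_gt x k (k+1) (by omega), mul_zero, add_zero, Nat.sub_self,
              facg_zero, mul_one, facg_succ]
            have h0 := ih k (le_refl k)
            rw [Nat.sub_self, facg_zero, mul_one] at h0
            linear_combination geo x (k+1) * h0
          · have h1 := ih k (by omega)
            have h2 := ih (k+1) hn
            have hm : n - k = (n - (k+1)) + 1 := by omega
            have ga : geo x (n+1) = geo x (k+1) + x ^ (k+1) * geo x ((n - (k+1)) + 1) := by
              have hga := geo_add x (k+1) ((n - (k+1)) + 1)
              rwa [show (k+1) + ((n - (k+1)) + 1) = n + 1 by omega] at hga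
            rw [hm, facg_succ x (n - (k+1))] at h1
            rw [facg_succ x k] at h2
            rw [show (n+1) - (k+1) = (n - (k+1)) + 1 by omega,
              facg_succ x (n - (k+1)), facg_succ x k, facg_succ x n, ga]
            linear_combination geo x (k+1) * h1 + x^(k+1) * geo x ((n - (k+1)) + 1) * h2

lemma gauss (x : QVT) (M : ℕ) : ∀ z : QVT,
    ∑ p ∈ Finset.range (M+1), (-1:QVT)^p * x^(tri p) * gb x M p * z^p
      = ∏ k ∈ Finset.range M, (1 - z * x^k) := by
  induction M with
  | zero =>
      intro z
      rw [Finset.prod_range_zero, Finset.sum_range_one]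
      rw [gb_zero x 0, show tri 0 = 0 from rfl]
      rw [pow_zero, pow_zero, pow_zero]
      ring
  | succ M ih =>
      intro z
      have hS := ih (z * x)
      set S := ∑ p ∈ Finset.range (M+1), (-1:QVT)^p * x^(tri p) * gb x M p * (z*x)^p with hSdef
      have e1 : ∑ p ∈ Finset.range (M+2), (-1:QVT)^p * x^(tri p) * gb x (M+1) p * z^p
          = (∑ q ∈ Finset.range (M+1),
              (-1:QVT)^(q+1) * x^(tri (q+1)) * gb x (M+1) (q+1) * z^(q+1)) + 1 := by
        rw [Finset.sum_range_succ'
          (fun p => (-1:QVT)^p * x^(tri p) * gb x (M+1) p * z^p) (M+1)]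
        congr 1
        rw [gb_zero x (M+1), show tri 0 = 0 from rfl]
        rw [pow_zero, pow_zero, pow_zero]
        ring
      have hsplit : ∀ q, (-1:QVT)^(q+1) * x^(tri (q+1)) * gb x (M+1) (q+1) * z^(q+1)
          = -(z * ((-1:QVT)^q * x^(tri q) * gb x M q * (z*x)^q))
            + ((-1:QVT)^(q+1) * x^(tri (q+1)) * gb x M (q+1) * (z*x)^(q+1)) := by
        intro q
        rw [show gb x (M+1) (q+1) = gb x M q + x ^ (q+1) * gb x M (q+1) from rfl]
        rw [show tri (q+1) = tri q + q from rfl]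
        rw [mul_pow z x q, mul_pow z x (q+1), pow_add x (tri q) q,
          pow_succ (-1:QVT) q, pow_succ z q, pow_succ x q]
        ring
      have e2 : ∑ q ∈ Finset.range (M+1),
            (-1:QVT)^(q+1) * x^(tri (q+1)) * gb x (M+1) (q+1) * z^(q+1)
          = -(z * S) + (S - 1) := by
        rw [Finset.sum_congr rfl (fun q _ => hsplit q), Finset.sum_add_distrib]
        congr 1
        · rw [hSdef, Finset.mul_sum, ← Finset.sum_neg_distrib]
        · have e3 : ∑ p ∈ Finset.range (M+2),
              (-1:QVT)^p * x^(tri p) * gb x M p * (z*x)^p = S := by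
            rw [Finset.sum_range_succ, gb_gt x M (M+1) (by omega)]
            rw [hSdef]
            ring
          have e4 := Finset.sum_range_succ'
            (fun p => (-1:QVT)^p * x^(tri p) * gb x M p * (z*x)^p) (M+1)
          rw [e3] at e4
          have e5 : ((-1:QVT))^0 * x^(tri 0) * gb x M 0 * (z*x)^0 = 1 := by
            rw [gb_zero x M, show tri 0 = 0 from rfl]
            rw [pow_zero, pow_zero, pow_zero]
            ring
          rw [e5] at e4
          linear_combination -e4
      rw [e1, e2, Finset.prod_range_succ'
        (fun k => 1 - z * x^k) M]
      have e6 : ∀ k, 1 - z * x^(k+1) = 1 - (z*x) * x^k := by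
        intro k
        rw [pow_succ' x k]
        ring
      rw [Finset.prod_congr rfl (fun k _ => e6 k), ← hS]
      rw [pow_zero]
      ring

/-! ### The Serre coefficients and the two key scalar identities -/

def Sc (c dd : ℤ) (N p : ℕ) : QVT :=
  ((-1:QVT) ^ p * t ^ (-c * (p:ℤ) * ((N + 1 - p : ℕ) : ℤ) + (p:ℤ) * dd))
    * ((Fc c p)⁻¹ * (1 * (Fc c (N + 1 - p))⁻¹))

lemma VT_mul_v (X Y A : ℤ) : (v ^ X * t ^ Y) * v ^ A = v ^ (X + A) * t ^ Y := by
  rw [mul_right_comm, vmul]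

lemma idA (c dd : ℤ) (hc : c ≠ 0) (N a : ℕ) (ha : a ≤ N) :
    Sc c dd N (a+1) * geo (v ^ (-(2*c))) (a+1)
      + Sc c dd N a * ((v ^ (-(2*c)))^a * (v ^ ((N:ℤ)*c) * t ^ dd) * geo (v ^ (-(2*c))) (N+1-a))
      = 0 := by
  have h1 : N + 1 - (a+1) = N - a := by omega
  have h2 : N + 1 - a = (N - a) + 1 := by omega
  unfold Sc
  rw [h1, h2]
  rw [Fc_succ c hc a, Fc_succ c hc (N - a)]
  rw [mul_inv (Fc c a), mul_inv (Fc c (N - a))]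
  rw [mul_inv (v ^ (c * (a:ℤ)) * t ^ (c * (a:ℤ))), mul_inv (v ^ (c * ((N - a : ℕ):ℤ)) * t ^ (c * ((N - a : ℕ):ℤ)))]
  rw [VT_inv, VT_inv]
  have hg1 : (geo (v ^ (-(2*c))) (a+1))⁻¹ * geo (v ^ (-(2*c))) (a+1) = 1 :=
    inv_mul_cancel₀ (geo_ne c hc a)
  have hg2 : (geo (v ^ (-(2*c))) ((N-a)+1))⁻¹ * geo (v ^ (-(2*c))) ((N-a)+1) = 1 :=
    inv_mul_cancel₀ (geo_ne c hc (N-a))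
  have m1 : t ^ (-c * ((a+1:ℕ):ℤ) * ((N - a : ℕ):ℤ) + ((a+1:ℕ):ℤ) * dd) * t ^ (-(c * (a:ℤ)))
      = t ^ (-c * ((a+1:ℕ):ℤ) * ((N - a : ℕ):ℤ) + ((a+1:ℕ):ℤ) * dd - c * (a:ℤ)) := by
    rw [tmul]
    congr 1
    try ring
  have m2 : v ^ (-(2*c) * (a:ℤ)) * (v ^ ((N:ℤ)*c) * v ^ (-(c * ((N - a : ℕ):ℤ))))
      = v ^ (-(c * (a:ℤ))) := by
    rw [vmul, vmul]
    congr 1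
    have hcast : ((N - a : ℕ):ℤ) = (N:ℤ) - (a:ℤ) := by omega
    rw [hcast]
    ring
  have m3 : t ^ (-c * (a:ℤ) * ((N - a + 1 : ℕ):ℤ) + (a:ℤ) * dd) * (t ^ dd * t ^ (-(c * ((N - a : ℕ):ℤ))))
      = t ^ (-c * ((a+1:ℕ):ℤ) * ((N - a : ℕ):ℤ) + ((a+1:ℕ):ℤ) * dd - c * (a:ℤ)) := by
    rw [tmul, tmul]
    congr 1
    push_cast
    try ring
  rw [vpowpow (-(2*c)) a]
  calc ((-1:QVT) ^ (a+1) * t ^ (-c * ((a+1:ℕ):ℤ) * ((N - a : ℕ):ℤ) + ((a+1:ℕ):ℤ) * dd))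
        * (((Fc c a)⁻¹ * ((v ^ (-(c * (a:ℤ))) * t ^ (-(c * (a:ℤ)))) * (geo (v ^ (-(2*c))) (a+1))⁻¹))
          * (1 * (Fc c (N-a))⁻¹)) * geo (v ^ (-(2*c))) (a+1)
      + ((-1:QVT) ^ a * t ^ (-c * (a:ℤ) * ((N - a + 1 : ℕ):ℤ) + (a:ℤ) * dd))
        * ((Fc c a)⁻¹ * (1 * ((Fc c (N-a))⁻¹
            * ((v ^ (-(c * ((N - a : ℕ):ℤ))) * t ^ (-(c * ((N - a : ℕ):ℤ)))) * (geo (v ^ (-(2*c))) ((N-a)+1))⁻¹))))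
        * (v ^ (-(2*c) * (a:ℤ)) * (v ^ ((N:ℤ)*c) * t ^ dd) * geo (v ^ (-(2*c))) ((N-a)+1))
      = (-1) * ((-1:QVT) ^ a
          * ((t ^ (-c * ((a+1:ℕ):ℤ) * ((N - a : ℕ):ℤ) + ((a+1:ℕ):ℤ) * dd) * t ^ (-(c * (a:ℤ))))
            * v ^ (-(c * (a:ℤ))) * (Fc c a)⁻¹ * (Fc c (N-a))⁻¹))
          * ((geo (v ^ (-(2*c))) (a+1))⁻¹ * geo (v ^ (-(2*c))) (a+1))
        + ((-1:QVT) ^ a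
          * ((t ^ (-c * (a:ℤ) * ((N - a + 1 : ℕ):ℤ) + (a:ℤ) * dd) * (t ^ dd * t ^ (-(c * ((N - a : ℕ):ℤ)))))
            * (v ^ (-(2*c) * (a:ℤ)) * (v ^ ((N:ℤ)*c) * v ^ (-(c * ((N - a : ℕ):ℤ)))))
            * (Fc c a)⁻¹ * (Fc c (N-a))⁻¹))
          * ((geo (v ^ (-(2*c))) ((N-a)+1))⁻¹ * geo (v ^ (-(2*c))) ((N-a)+1)) := by
        rw [pow_succ (-1:QVT) a]
        push_cast
        ring
    _ = 0 := by
        rw [hg1, hg2, m1, m2, m3]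
        ring

lemma VT_mul_t (X Y B : ℤ) : (v ^ X * t ^ Y) * t ^ B = v ^ X * t ^ (Y + B) := by
  rw [mul_assoc, tmul]

lemma Fc_eq (c : ℤ) (hc : c ≠ 0) (n : ℕ) :
    Fc c n = v ^ (c * ((tri n : ℕ):ℤ)) * t ^ (c * ((tri n : ℕ):ℤ)) * facg (v ^ (-(2*c))) n := by
  induction n with
  | zero =>
      rw [Fc_zero, facg_zero, show tri 0 = 0 from rfl]
      norm_num
  | succ k ih =>
      rw [Fc_succ c hc k, ih, show tri (k+1) = tri k + k from rfl, facg_succ]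
      have hcast : c * ((tri k + k : ℕ):ℤ) = c * ((tri k : ℕ):ℤ) + c * (k:ℤ) := by
        push_cast
        ring
      rw [hcast, ← VT_mul]
      ring

lemma facg_ne (c : ℤ) (hc : c ≠ 0) (n : ℕ) : facg (v ^ (-(2*c))) n ≠ 0 := by
  induction n with
  | zero => rw [facg_zero]; exact one_ne_zero
  | succ k ih => rw [facg_succ]; exact mul_ne_zero ih (geo_ne c hc k)

lemma facg_inv_pair (c : ℤ) (hc : c ≠ 0) (M p : ℕ) (hp : p ≤ M) :
    (facg (v ^ (-(2*c))) p)⁻¹ * (facg (v ^ (-(2*c))) (M - p))⁻¹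
      = gb (v ^ (-(2*c))) M p * (facg (v ^ (-(2*c))) M)⁻¹ := by
  have h := gb_fac (v ^ (-(2*c))) M p hp
  have hFp := facg_ne c hc p
  have hFmp := facg_ne c hc (M-p)
  apply mul_right_cancel₀ (facg_ne c hc M)
  rw [mul_assoc (gb (v ^ (-(2*c))) M p), inv_mul_cancel₀ (facg_ne c hc M), mul_one, ← h]
  calc (facg (v ^ (-(2*c))) p)⁻¹ * (facg (v ^ (-(2*c))) (M - p))⁻¹
        * (gb (v ^ (-(2*c))) M p * (facg (v ^ (-(2*c))) p * facg (v ^ (-(2*c))) (M - p)))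
      = gb (v ^ (-(2*c))) M p * (((facg (v ^ (-(2*c))) p)⁻¹ * facg (v ^ (-(2*c))) p)
          * ((facg (v ^ (-(2*c))) (M - p))⁻¹ * facg (v ^ (-(2*c))) (M - p))) := by ring
    _ = gb (v ^ (-(2*c))) M p := by
        rw [inv_mul_cancel₀ hFp, inv_mul_cancel₀ hFmp, mul_one, mul_one]

lemma tri_id (p : ℕ) : 2 * ((tri p : ℕ):ℤ) = (p:ℤ) * (p:ℤ) - (p:ℤ) := by
  induction p with
  | zero => simp [tri]
  | succ p ih =>
      rw [show tri (p+1) = tri p + p from rfl]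
      push_cast at ih ⊢
      ring_nf
      ring_nf at ih
      linarith

lemma idB (c dd : ℤ) (hc : c ≠ 0) (N : ℕ) :
    ∑ p ∈ Finset.range (N+2), Sc c dd N p * (v ^ ((N:ℤ)*c) * t ^ (-dd))^p = 0 := by
  have per : ∀ p ∈ Finset.range (N+2), Sc c dd N p * (v ^ ((N:ℤ)*c) * t ^ (-dd))^p
      = (v ^ (-(c * ((tri (N+1) : ℕ):ℤ))) * t ^ (-(c * ((tri (N+1) : ℕ):ℤ)))
          * (facg (v ^ (-(2*c))) (N+1))⁻¹)
        * ((-1:QVT)^p * (v ^ (-(2*c)))^(tri p) * gb (v ^ (-(2*c))) (N+1) p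
            * (v ^ (2*c*(N:ℤ)))^p) := by
    intro p hp
    have hp' : p ≤ N + 1 := by
      have := Finset.mem_range.mp hp
      omega
    unfold Sc
    rw [Fc_eq c hc p, Fc_eq c hc (N+1-p)]
    rw [mul_inv (v ^ (c * ((tri p : ℕ):ℤ)) * t ^ (c * ((tri p : ℕ):ℤ))),
      mul_inv (v ^ (c * ((tri (N+1-p) : ℕ):ℤ)) * t ^ (c * ((tri (N+1-p) : ℕ):ℤ)))]
    rw [VT_inv, VT_inv]
    have hpair : (facg (v ^ (-(2*c))) p)⁻¹ * (facg (v ^ (-(2*c))) (N+1-p))⁻¹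
        = gb (v ^ (-(2*c))) (N+1) p * (facg (v ^ (-(2*c))) (N+1))⁻¹ :=
      facg_inv_pair c hc (N+1) p hp'
    rw [VT_pow ((N:ℤ)*c) (-dd) p]
    rw [vpowpow (-(2*c)) (tri p), vpowpow (2*c*(N:ℤ)) p]
    have hsub : ((N+1-p : ℕ):ℤ) = (N:ℤ) + 1 - (p:ℤ) := by omega
    have htri : ((tri (N+1) : ℕ):ℤ)
        = ((tri p : ℕ):ℤ) + ((tri (N+1-p) : ℕ):ℤ) + (p:ℤ) * ((N:ℤ) + 1 - (p:ℤ)) := by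
      have h0 : tri (N+1) = tri p + tri (N+1-p) + p * (N+1-p) := by
        have := tri_add p (N+1-p)
        rw [show p + (N+1-p) = N+1 by omega] at this
        exact this
      have h1 : ((tri (N+1) : ℕ):ℤ)
          = ((tri p : ℕ):ℤ) + ((tri (N+1-p) : ℕ):ℤ) + ((p * (N+1-p) : ℕ):ℤ) := by
        exact_mod_cast congrArg (Nat.cast : ℕ → ℤ) h0
      rw [h1]
      congr 1
      push_cast [hsub]
      ring
    calc ((-1:QVT)^p * t ^ (-c * (p:ℤ) * ((N+1-p : ℕ):ℤ) + (p:ℤ) * dd))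
          * (((v ^ (-(c * ((tri p : ℕ):ℤ))) * t ^ (-(c * ((tri p : ℕ):ℤ))))
              * (facg (v ^ (-(2*c))) p)⁻¹)
            * (1 * ((v ^ (-(c * ((tri (N+1-p) : ℕ):ℤ))) * t ^ (-(c * ((tri (N+1-p) : ℕ):ℤ))))
              * (facg (v ^ (-(2*c))) (N+1-p))⁻¹)))
          * (v ^ ((N:ℤ)*c*(p:ℤ)) * t ^ (-dd*(p:ℤ)))
        = ((-1:QVT)^p
            * ((facg (v ^ (-(2*c))) p)⁻¹ * (facg (v ^ (-(2*c))) (N+1-p))⁻¹))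
          * ((((v ^ (-(c * ((tri p : ℕ):ℤ))) * t ^ (-c * (p:ℤ) * ((N+1-p : ℕ):ℤ) + (p:ℤ) * dd))
              * (v ^ (-(c * ((tri (N+1-p) : ℕ):ℤ))) * t ^ (-(c * ((tri p : ℕ):ℤ)))))
              * (v ^ ((N:ℤ)*c*(p:ℤ)) * t ^ (-(c * ((tri (N+1-p) : ℕ):ℤ)))))
              * t ^ (-dd*(p:ℤ))) := by
          ring
      _ = ((-1:QVT)^p
            * (gb (v ^ (-(2*c))) (N+1) p * (facg (v ^ (-(2*c))) (N+1))⁻¹))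
          * (v ^ (-(c * ((tri p : ℕ):ℤ)) + -(c * ((tri (N+1-p) : ℕ):ℤ)) + (N:ℤ)*c*(p:ℤ))
             * t ^ ((-c * (p:ℤ) * ((N+1-p : ℕ):ℤ) + (p:ℤ) * dd + -(c * ((tri p : ℕ):ℤ))
                + -(c * ((tri (N+1-p) : ℕ):ℤ))) + -dd*(p:ℤ))) := by
          rw [hpair, VT_mul, VT_mul, VT_mul_t]
      _ = (v ^ (-(c * ((tri (N+1) : ℕ):ℤ))) * t ^ (-(c * ((tri (N+1) : ℕ):ℤ)))
          * (facg (v ^ (-(2*c))) (N+1))⁻¹)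
        * ((-1:QVT)^p * v ^ (-(2*c) * ((tri p : ℕ):ℤ)) * gb (v ^ (-(2*c))) (N+1) p
            * v ^ (2*c*(N:ℤ) * (p:ℤ))) := by
          rw [show ((-1:QVT)^p * v ^ (-(2*c) * ((tri p : ℕ):ℤ)) * gb (v ^ (-(2*c))) (N+1) p
              * v ^ (2*c*(N:ℤ) * (p:ℤ)))
            = ((-1:QVT)^p * gb (v ^ (-(2*c))) (N+1) p)
              * (v ^ (-(2*c) * ((tri p : ℕ):ℤ)) * v ^ (2*c*(N:ℤ) * (p:ℤ))) from by ring]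
          rw [vmul]
          rw [show (v ^ (-(c * ((tri (N+1) : ℕ):ℤ))) * t ^ (-(c * ((tri (N+1) : ℕ):ℤ)))
              * (facg (v ^ (-(2*c))) (N+1))⁻¹)
            * (((-1:QVT)^p * gb (v ^ (-(2*c))) (N+1) p)
              * v ^ (-(2*c) * ((tri p : ℕ):ℤ) + 2*c*(N:ℤ) * (p:ℤ)))
            = ((-1:QVT)^p * (gb (v ^ (-(2*c))) (N+1) p * (facg (v ^ (-(2*c))) (N+1))⁻¹))
              * ((v ^ (-(c * ((tri (N+1) : ℕ):ℤ)))
                  * v ^ (-(2*c) * ((tri p : ℕ):ℤ) + 2*c*(N:ℤ) * (p:ℤ)))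
                * t ^ (-(c * ((tri (N+1) : ℕ):ℤ)))) from by ring]
          rw [vmul]
          congr 2
          · congr 1
            rw [htri]
            linear_combination c * tri_id p
          · congr 1
            rw [htri, hsub]
            ring
  rw [Finset.sum_congr rfl per, ← Finset.mul_sum]
  rw [gauss (v ^ (-(2*c))) (N+1) (v ^ (2*c*(N:ℤ)))]
  have hzero : (1:QVT) - v ^ (2*c*(N:ℤ)) * (v ^ (-(2*c)))^N = 0 := by
    rw [vpowpow, vmul, show 2*c*(N:ℤ) + -(2*c)*(N:ℤ) = 0 by ring, zpow_zero, sub_self]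
  rw [Finset.prod_eq_zero (Finset.mem_range.mpr (by omega : N < N+1)) hzero, mul_zero]

/-! ### Expansion of the Serre element -/

lemma of_pow (i : I) (n : ℕ) :
    FreeMonoid.of i ^ n = FreeMonoid.ofList (List.replicate n i) := by
  induction n with
  | zero => rw [pow_zero]; rfl
  | succ n ih => rw [pow_succ', ih, List.replicate_succ]; rfl

lemma word_eq (i j : I) (p q : ℕ) :
    FreeMonoid.of i ^ p * (FreeMonoid.of j * FreeMonoid.of i ^ q)
      = FreeMonoid.ofList (List.replicate p i ++ j :: List.replicate q i) := by
  rw [of_pow, of_pow]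
  rfl

lemma powF_theta (i : I) (n : ℕ) :
    powF (θ i) n = Finsupp.single (FreeMonoid.of i ^ n) 1 := by
  induction n with
  | zero => show Finsupp.single 1 1 = _; rw [pow_zero]
  | succ n ih =>
      show mulF (θ i) (powF (θ i) n) = _
      rw [ih, show θ i = Finsupp.single (FreeMonoid.of i) (1:QVT) from rfl,
        mulF_single_single, one_mul, ← pow_succ']

lemma dpow_eq (C : I → I → ℤ) (i : I) (n : ℕ) :
    dpow C i n = Finsupp.single (FreeMonoid.of i ^ n) ((Fc (C i i) n)⁻¹) := by
  unfold dpow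
  rw [powF_theta, Finsupp.smul_single, smul_eq_mul, mul_one]
  rfl

lemma serre_eq (C : I → I → ℤ) (i j : I) (N : ℕ) :
    serre C i j N = ∑ p ∈ Finset.range (N+2),
      Finsupp.single (FreeMonoid.of i ^ p * (FreeMonoid.of j * FreeMonoid.of i ^ (N+1-p)))
        (Sc (C i i) (C i j - C j i) N p) := by
  unfold serre
  refine Finset.sum_congr rfl fun p _ => ?_
  rw [dpow_eq, dpow_eq, show θ j = Finsupp.single (FreeMonoid.of j) (1:QVT) from rfl,
    mulF_single_single, mulF_single_single, Finsupp.smul_single, smul_eq_mul]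
  rfl

lemma twi_eval (C : I → I → ℤ) (a b : I) :
    twi C a b = v ^ (-(C a b + C b a)) * t ^ (C a b - C b a) := by
  unfold twi tw dotF
  rw [pairF_single_single, pairF_single_single]
  norm_num

lemma twi_ii (C : I → I → ℤ) (i : I) : twi C i i = v ^ (-(2 * C i i)) := by
  rw [twi_eval, show C i i - C i i = 0 by ring, zpow_zero, mul_one]
  congr 1
  ring

end SerreProof

set_option maxHeartbeats 2000000 in
theorem serre_relation (C : I → I → ℤ)
    (hdiag : ∀ i, 0 < C i i) (hoff : ∀ i j, i ≠ j → C i j ≤ 0)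
    (B : FF I →ₗ[QVT] FF I →ₗ[QVT] QVT)
    (hsym : ∀ x y : FF I, B x y = B y x)
    (hone : B (Finsupp.single 1 1) (Finsupp.single 1 1) = 1)
    (hθθ : ∀ i j : I, B (θ i) (θ j) =
      if i = j then (1 - v ^ (-(2 * C i i)))⁻¹ else 0)
    (hright : ∀ x y' y'' : FF I, B x (mulF y' y'') = B2 C B (rF C x) (tens y' y''))
    (hleft : ∀ x' x'' y : FF I, B (mulF x' x'') y = B2 C B (tens x' x'') (rF C y))
    (i j : I) (hij : i ≠ j) (N : ℕ) (hN : C i j + C j i = -(N : ℤ) * C i i) :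
    ∀ y : FF I, B (serre C i j N) y = 0 := by
  have hc : C i i ≠ 0 := by have := hdiag i; omega
  set c : ℤ := C i i with hcdef
  set dd : ℤ := C i j - C j i with hdddef
  have twi_ij : twi C i j = v ^ ((N:ℤ) * c) * t ^ dd := by
    rw [twi_eval]
    exact VT_eq (by linarith [hN]) rfl
  have twi_ji : twi C j i = v ^ ((N:ℤ) * c) * t ^ (-dd) := by
    rw [twi_eval]
    exact VT_eq (by linarith [hN]) (by rw [hdddef]; ring)
  -- the key statement, for basis elements
  have KEY : ∀ w : FreeMonoid I, (B (serre C i j N)) (Finsupp.single w 1) = 0 := by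
    intro w
    rw [serre_eq, map_sum, LinearMap.sum_apply]
    have hterm : ∀ p ∈ Finset.range (N+2),
        (B (Finsupp.single (FreeMonoid.of i ^ p
            * (FreeMonoid.of j * FreeMonoid.of i ^ (N+1-p))) (Sc c dd N p)))
          (Finsupp.single w 1)
        = Sc c dd N p
            * Ee B (FreeMonoid.ofList (List.replicate p i ++ j :: List.replicate (N+1-p) i)) w := by
      intro p _
      rw [word_eq]
      rw [show Finsupp.single
            (FreeMonoid.ofList (List.replicate p i ++ j :: List.replicate (N+1-p) i))
            (Sc c dd N p)
          = Sc c dd N p • Finsupp.single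
            (FreeMonoid.ofList (List.replicate p i ++ j :: List.replicate (N+1-p) i)) (1:QVT) by
        rw [Finsupp.smul_single, smul_eq_mul, mul_one]]
      rw [map_smul, LinearMap.smul_apply, smul_eq_mul]
      rfl
    rw [Finset.sum_congr rfl hterm]
    -- now case on the word w
    rcases hlw : w.toList with _ | ⟨k, w'⟩
    · have hw1 : w = 1 := hlw
      refine Finset.sum_eq_zero fun p _ => ?_
      have hne : FreeMonoid.ofList (List.replicate p i ++ j :: List.replicate (N+1-p) i)
          ≠ 1 := by
        intro hcon
        have := congrArg FreeMonoid.toList hcon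
        rw [FreeMonoid.toList_ofList] at this
        simp at this
      rw [hw1, E_ne_one_right C B hone hright hleft _ hne, mul_zero]
    · have hw2 : w = FreeMonoid.of k * FreeMonoid.ofList w' := hlw
      rw [hw2]
      have hrec : ∀ p ∈ Finset.range (N+2),
          Sc c dd N p
            * Ee B (FreeMonoid.ofList (List.replicate p i ++ j :: List.replicate (N+1-p) i))
              (FreeMonoid.of k * FreeMonoid.ofList w')
          = Sc c dd N p * ((1 - v ^ (-(2 * C k k)))⁻¹
              * evF (fun u => t ^ (2 * pairF (Dmat C) (Finsupp.single k 1) (wt u))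
                  * Ee B u (FreeMonoid.ofList w'))
                (rhoF C k (List.replicate p i ++ j :: List.replicate (N+1-p) i))) := by
        intro p _
        rw [E_rec C B hsym hone hθθ hright hleft]
      rw [Finset.sum_congr rfl hrec]
      by_cases hki : k = i
      · -- k = i : use rhoF_serre_i and identity A
        subst hki
        have hstep : ∀ p ∈ Finset.range (N+2),
            Sc c dd N p * ((1 - v ^ (-(2 * C k k)))⁻¹
              * evF (fun u => t ^ (2 * pairF (Dmat C) (Finsupp.single k 1) (wt u))
                  * Ee B u (FreeMonoid.ofList w'))
                (rhoF C k (List.replicate p k ++ j :: List.replicate (N+1-p) k)))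
            = (1 - v ^ (-(2 * C k k)))⁻¹
                * (Sc c dd N p * geo (twi C k k) p
                    * (t ^ (2 * pairF (Dmat C) (Finsupp.single k 1)
                        (wt (FreeMonoid.ofList (List.replicate (p-1) k ++ j :: List.replicate (N+1-p) k))))
                      * Ee B (FreeMonoid.ofList (List.replicate (p-1) k ++ j :: List.replicate (N+1-p) k))
                        (FreeMonoid.ofList w')))
              + (1 - v ^ (-(2 * C k k)))⁻¹
                * (Sc c dd N p * ((twi C k k)^p * twi C k j * geo (twi C k k) (N+1-p))
                    * (t ^ (2 * pairF (Dmat C) (Finsupp.single k 1)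
                        (wt (FreeMonoid.ofList (List.replicate p k ++ j :: List.replicate (N+1-p-1) k))))
                      * Ee B (FreeMonoid.ofList (List.replicate p k ++ j :: List.replicate (N+1-p-1) k))
                        (FreeMonoid.ofList w'))) := by
          intro p _
          rw [rhoF_serre_i C hij p (N+1-p), evF_add, evF_smul, evF_smul, evF_single, evF_single]
          ring
        rw [Finset.sum_congr rfl hstep, Finset.sum_add_distrib]
        set G : ℕ → ℕ → QVT := fun a b =>
          t ^ (2 * pairF (Dmat C) (Finsupp.single k 1)
              (wt (FreeMonoid.ofList (List.replicate a k ++ j :: List.replicate b k))))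
            * Ee B (FreeMonoid.ofList (List.replicate a k ++ j :: List.replicate b k))
              (FreeMonoid.ofList w') with hGdef
        rw [Finset.sum_range_succ' (fun p => (1 - v ^ (-(2 * C k k)))⁻¹
            * (Sc c dd N p * geo (twi C k k) p * G (p-1) (N+1-p))) (N+1)]
        rw [Finset.sum_range_succ (fun p => (1 - v ^ (-(2 * C k k)))⁻¹
            * (Sc c dd N p * ((twi C k k)^p * twi C k j * geo (twi C k k) (N+1-p)) * G p (N+1-p-1)))
          (N+1)]
        rw [geo_zero, Nat.sub_self, geo_zero]
        simp only [mul_zero, zero_mul, add_zero]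
        rw [← Finset.sum_add_distrib]
        refine Finset.sum_eq_zero fun a ha => ?_
        have haN : a ≤ N := by
          have := Finset.mem_range.mp ha
          omega
        have e1 : a + 1 - 1 = a := by omega
        have e2 : N + 1 - (a + 1) = N - a := by omega
        have e3 : N + 1 - a - 1 = N - a := by omega
        rw [e1, e2, e3]
        have hA := idA c dd hc N a haN
        rw [twi_ii, twi_ij]
        calc (1 - v ^ (-(2 * C k k)))⁻¹
              * (Sc c dd N (a+1) * geo (v ^ (-(2 * c))) (a+1) * G a (N-a))
            + (1 - v ^ (-(2 * C k k)))⁻¹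
              * (Sc c dd N a * ((v ^ (-(2 * c)))^a * (v ^ ((N:ℤ) * c) * t ^ dd)
                  * geo (v ^ (-(2 * c))) (N+1-a)) * G a (N-a))
            = ((1 - v ^ (-(2 * C k k)))⁻¹ * G a (N-a))
              * (Sc c dd N (a+1) * geo (v ^ (-(2 * c))) (a+1)
                + Sc c dd N a * ((v ^ (-(2 * c)))^a * (v ^ ((N:ℤ) * c) * t ^ dd)
                    * geo (v ^ (-(2 * c))) (N+1-a))) := by ring
          _ = 0 := by rw [hA, mul_zero]
      · by_cases hkj : k = j
        · -- k = j : use rhoF_serre_j and identity B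
          subst hkj
          have hstep : ∀ p ∈ Finset.range (N+2),
              Sc c dd N p * ((1 - v ^ (-(2 * C k k)))⁻¹
                * evF (fun u => t ^ (2 * pairF (Dmat C) (Finsupp.single k 1) (wt u))
                    * Ee B u (FreeMonoid.ofList w'))
                  (rhoF C k (List.replicate p i ++ k :: List.replicate (N+1-p) i)))
              = (Sc c dd N p * (v ^ ((N:ℤ) * c) * t ^ (-dd))^p)
                  * ((1 - v ^ (-(2 * C k k)))⁻¹
                    * (t ^ (2 * pairF (Dmat C) (Finsupp.single k 1)
                        (wt (FreeMonoid.ofList (List.replicate (N+1) i))))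
                      * Ee B (FreeMonoid.ofList (List.replicate (N+1) i))
                        (FreeMonoid.ofList w'))) := by
            intro p hp
            have hp' : p + (N+1-p) = N+1 := by
              have := Finset.mem_range.mp hp
              omega
            rw [rhoF_serre_j C hij p (N+1-p), hp', evF_smul, evF_single, twi_ji]
            ring
          rw [Finset.sum_congr rfl hstep, ← Finset.sum_mul, idB c dd hc N, zero_mul]
        · -- k ∉ {i, j} : rhoF vanishes
          refine Finset.sum_eq_zero fun p _ => ?_
          have hmem : k ∉ List.replicate p i ++ j :: List.replicate (N+1-p) i := by
            intro hmem
            rcases List.mem_append.mp hmem with h | h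
            · exact hki (List.mem_replicate.mp h).2
            · rcases List.mem_cons.mp h with h' | h'
              · exact hkj h'
              · exact hki (List.mem_replicate.mp h').2
          rw [rhoF_not_mem C k _ hmem, evF_zero, mul_zero, mul_zero]
  -- conclude by linearity
  intro y
  induction y using Finsupp.induction_linear with
  | zero => exact map_zero _
  | add f g hf hg => rw [map_add, hf, hg, add_zero]
  | single w cv =>
      rw [show Finsupp.single w cv = cv • Finsupp.single w (1:QVT) by
        rw [Finsupp.smul_single, smul_eq_mul, mul_one]]
      rw [map_smul, smul_eq_mul, KEY w, mul_zero]

end
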